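/- For the fully sequential five-player Tullock contest, f_0(X) = 120X⁶ - 240X⁵ + 150X⁴ - 30X³ + X², and its largest root in [0,1] equals 1/2 + (1/2)·√(1/2 + √7/(2√15)). -/

import Mathlib

/-- For the fully sequential five-player Tullock contest with `f₅(X) = X` and
`f_{t-1}(X) = f_t(X) - f_t'(X)·X(1-X)`, one has
`f₀(X) = 120X⁶ - 240X⁵ + 150X⁴ - 30X³ + X²`, and the largest root of `f₀` in
`[0,1]` equals `1/2 + (1/2)·√(1/2 + √7/(2√15))`. -/
theorem stmt_12 (f : ℕ → ℝ → ℝ)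
    (h5 : ∀ X : ℝ, f 5 X = X)
    (hrec : ∀ t, 1 ≤ t → t ≤ 5 → ∀ X : ℝ,
      f (t-1) X = f t X - deriv (f t) X * (X * (1 - X))) :
    (∀ X : ℝ, f 0 X = 120*X^6 - 240*X^5 + 150*X^4 - 30*X^3 + X^2) ∧
    IsGreatest {X : ℝ | X ∈ Set.Icc (0:ℝ) 1 ∧ f 0 X = 0}
      (1/2 + (1/2) * Real.sqrt (1/2 + Real.sqrt 7 / (2 * Real.sqrt 15))) := by
  have E5 : f 5 = fun X : ℝ => X := funext h5
  have e4 : ∀ X : ℝ, f 4 X = X^2 := by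
    intro X
    have h := hrec 5 (by norm_num) (by norm_num) X
    rw [E5] at h
    simp only [deriv_id''] at h
    rw [h]; ring
  have E4 : f 4 = fun X : ℝ => X^2 := funext e4
  have d4 : ∀ x : ℝ, HasDerivAt (fun X : ℝ => X^2) (2*x) x := by
    intro x
    have := hasDerivAt_pow 2 x
    exact this.congr_deriv (by push_cast; ring)
  have e3 : ∀ X : ℝ, f 3 X = 2*X^3 - X^2 := by
    intro X
    have h := hrec 4 (by norm_num) (by norm_num) X
    rw [E4, (d4 X).deriv] at h
    rw [h]; ring
  have E3 : f 3 = fun X : ℝ => 2*X^3 - X^2 := funext e3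
  have d3 : ∀ x : ℝ, HasDerivAt (fun X : ℝ => 2*X^3 - X^2) (6*x^2 - 2*x) x := by
    intro x
    have := ((hasDerivAt_pow 3 x).const_mul (2:ℝ)).sub (hasDerivAt_pow 2 x)
    exact this.congr_deriv (by push_cast; ring)
  have e2 : ∀ X : ℝ, f 2 X = 6*X^4 - 6*X^3 + X^2 := by
    intro X
    have h := hrec 3 (by norm_num) (by norm_num) X
    rw [E3, (d3 X).deriv] at h
    rw [h]; ring
  have E2 : f 2 = fun X : ℝ => 6*X^4 - 6*X^3 + X^2 := funext e2
  have d2 : ∀ x : ℝ, HasDerivAt (fun X : ℝ => 6*X^4 - 6*X^3 + X^2)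
      (24*x^3 - 18*x^2 + 2*x) x := by
    intro x
    have := (((hasDerivAt_pow 4 x).const_mul (6:ℝ)).sub
      ((hasDerivAt_pow 3 x).const_mul (6:ℝ))).add (hasDerivAt_pow 2 x)
    exact this.congr_deriv (by push_cast; ring)
  have e1 : ∀ X : ℝ, f 1 X = 24*X^5 - 36*X^4 + 14*X^3 - X^2 := by
    intro X
    have h := hrec 2 (by norm_num) (by norm_num) X
    rw [E2, (d2 X).deriv] at h
    rw [h]; ring
  have E1 : f 1 = fun X : ℝ => 24*X^5 - 36*X^4 + 14*X^3 - X^2 := funext e1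
  have d1 : ∀ x : ℝ, HasDerivAt (fun X : ℝ => 24*X^5 - 36*X^4 + 14*X^3 - X^2)
      (120*x^4 - 144*x^3 + 42*x^2 - 2*x) x := by
    intro x
    have := ((((hasDerivAt_pow 5 x).const_mul (24:ℝ)).sub
      ((hasDerivAt_pow 4 x).const_mul (36:ℝ))).add
      ((hasDerivAt_pow 3 x).const_mul (14:ℝ))).sub (hasDerivAt_pow 2 x)
    exact this.congr_deriv (by push_cast; ring)
  have e0 : ∀ X : ℝ, f 0 X = 120*X^6 - 240*X^5 + 150*X^4 - 30*X^3 + X^2 := by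
    intro X
    have h := hrec 1 (by norm_num) (by norm_num) X
    rw [E1, (d1 X).deriv] at h
    rw [h]; ring
  refine ⟨e0, ?_⟩
  -- root analysis
  set s : ℝ := Real.sqrt 7 / (2 * Real.sqrt 15) with hs_def
  have hs0 : 0 ≤ s := by positivity
  have hs2 : s^2 = 7/60 := by
    rw [hs_def, div_pow, Real.sq_sqrt (by norm_num : (7:ℝ) ≥ 0), mul_pow,
      Real.sq_sqrt (by norm_num : (15:ℝ) ≥ 0)]
    norm_num
  have hs_le : s ≤ 1/2 := by nlinarith
  set w : ℝ := Real.sqrt (1/2 + s) with hw_def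
  have hw0 : 0 ≤ w := Real.sqrt_nonneg _
  have hw2 : w^2 = 1/2 + s := Real.sq_sqrt (by linarith)
  have hw1 : w ≤ 1 := by nlinarith
  constructor
  · constructor
    · constructor
      · nlinarith
      · nlinarith
    · rw [e0]
      linear_combination ((1/2 + (1/2)*w)^2 * (15/2) * (w^2 + s - 1/2)) * hw2 +
        ((1/2 + (1/2)*w)^2 * (15/2)) * hs2
  · rintro X ⟨⟨hX0, hX1⟩, hfX⟩
    by_contra hcon
    push_neg at hcon
    rw [e0] at hfX
    have hXgt : 1/2 + (1/2) * w < X := hcon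
    have hfac1 : (X - 1/2)^2 - (1/2 + s)/4 > 0 := by nlinarith
    have hfac2 : (X - 1/2)^2 - (1/2 - s)/4 > 0 := by nlinarith
    have hX2 : 0 < X^2 := by nlinarith
    have hpos : 0 < X^2 * (120 * ((X - 1/2)^2 - (1/2 + s)/4) *
        ((X - 1/2)^2 - (1/2 - s)/4)) :=
      mul_pos hX2 (mul_pos (mul_pos (by norm_num) hfac1) hfac2)
    nlinarith [hs2, hfX, hpos]
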